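/- arXiv:1706.06679 — 2 statements merged into one kernel-verified Lean document; each statement's English description precedes it below -/
import Mathlib

section
/- For s with Re s = 1 and u ≥ 1, the function G(u,s) = ∫_0^{1/u} (1 − e^{−ts})/t dt satisfies |G(u,s)| ≤ C·|s|/u when |s| < u, and |G(u,s)| ≤ C·(1 + log(|s|/u)) when |s| > u, for some absolute constant C. -/
open MeasureTheory

/-- `G u s = ∫_0^{1/u} (1 − e^{−ts})/t dt`. -/
noncomputable def G (u : ℝ) (s : ℂ) : ℂ :=
  ∫ t in (0:ℝ)..(1/u), (1 - Complex.exp (-(t * s))) / t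

lemma fmeas (s : ℂ) : Measurable (fun t : ℝ => (1 - Complex.exp (-(t * s))) / t) := by
  apply Measurable.div
  · exact (measurable_const.sub ((Complex.measurable_ofReal.mul_const s).neg.cexp))
  · exact Complex.measurable_ofReal

lemma norm_ts (s : ℂ) (t : ℝ) (ht : 0 ≤ t) : ‖-(↑t * s)‖ = t * ‖s‖ := by
  simp [abs_of_nonneg ht]

lemma bound_small {s : ℂ} {t : ℝ} (ht : 0 < t) (hts : t * ‖s‖ ≤ 1) :
    ‖(1 - Complex.exp (-(t * s))) / t‖ ≤ 2 * ‖s‖ := by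
  have h1 : ‖-(↑t * s)‖ ≤ 1 := by rw [norm_ts s t ht.le]; exact hts
  have h2 := Complex.norm_exp_sub_one_le h1
  rw [norm_ts s t ht.le] at h2
  have : ‖1 - Complex.exp (-(↑t * s))‖ ≤ 2 * (t * ‖s‖) := by
    rw [norm_sub_rev]; exact h2
  rw [norm_div]
  have hnt : ‖(t : ℂ)‖ = t := by simp [abs_of_nonneg ht.le]
  rw [hnt, div_le_iff₀ ht]
  calc ‖1 - Complex.exp (-(↑t * s))‖ ≤ 2 * (t * ‖s‖) := this
    _ = 2 * ‖s‖ * t := by ring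

lemma bound_two {s : ℂ} (hs : s.re = 1) {t : ℝ} (ht : 0 < t) :
    ‖(1 - Complex.exp (-(t * s))) / t‖ ≤ 2 / t := by
  rw [norm_div]
  have hnt : ‖(t : ℂ)‖ = t := by simp [abs_of_nonneg ht.le]
  rw [hnt]
  rw [div_le_div_iff_of_pos_right ht]
  calc ‖1 - Complex.exp (-(↑t * s))‖ ≤ ‖(1:ℂ)‖ + ‖Complex.exp (-(↑t * s))‖ := norm_sub_le _ _
    _ = 1 + Real.exp (-t) := by
        rw [Complex.norm_exp]
        simp [hs]
    _ ≤ 2 := by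
        have : Real.exp (-t) ≤ 1 := Real.exp_le_one_iff.2 (by linarith)
        linarith

lemma snorm_ge_one {s : ℂ} (hs : s.re = 1) : 1 ≤ ‖s‖ := by
  have := Complex.abs_re_le_norm s
  rw [hs] at this
  simpa using this

lemma bound_all {s : ℂ} (hs : s.re = 1) {t : ℝ} (ht : 0 < t) :
    ‖(1 - Complex.exp (-(t * s))) / t‖ ≤ 2 * ‖s‖ := by
  rcases le_or_gt (t * ‖s‖) 1 with h | h
  · exact bound_small ht h
  · refine (bound_two hs ht).trans ?_
    rw [div_le_iff₀ ht]
    nlinarith [snorm_ge_one hs]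

lemma intInt {s : ℂ} (hs : s.re = 1) {a b : ℝ} (hab : a ≤ b) (ha : 0 ≤ a) :
    IntervalIntegrable (fun t : ℝ => (1 - Complex.exp (-(t * s))) / t) volume a b := by
  rw [intervalIntegrable_iff_integrableOn_Ioc_of_le hab]
  constructor
  · exact (fmeas s).aestronglyMeasurable.restrict
  · apply HasFiniteIntegral.restrict_of_bounded (C := 2 * ‖s‖) measure_Ioc_lt_top
    filter_upwards [ae_restrict_mem measurableSet_Ioc] with t ht
    exact bound_all hs (lt_of_le_of_lt ha ht.1)

theorem G_bound :
    ∃ C : ℝ, 0 < C ∧ ∀ (s : ℂ) (u : ℝ), s.re = 1 → 1 ≤ u →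
      (‖s‖ < u → ‖G u s‖ ≤ C * ‖s‖ / u) ∧
      (u < ‖s‖ → ‖G u s‖ ≤ C * (1 + Real.log (‖s‖ / u))) := by
  refine ⟨4, by norm_num, fun s u hs hu => ?_⟩
  have hu0 : 0 < u := lt_of_lt_of_le one_pos hu
  have hs1 : 1 ≤ ‖s‖ := snorm_ge_one hs
  have hs0 : 0 < ‖s‖ := lt_of_lt_of_le one_pos hs1
  constructor
  · intro hsu
    have key : ∀ t ∈ Set.uIoc (0:ℝ) (1/u),
        ‖(1 - Complex.exp (-(t * s))) / t‖ ≤ 2 * ‖s‖ := by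
      intro t ht
      rw [Set.uIoc_of_le (by positivity)] at ht
      apply bound_small ht.1
      have : t ≤ 1/u := ht.2
      calc t * ‖s‖ ≤ (1/u) * ‖s‖ := by
            exact mul_le_mul_of_nonneg_right this hs0.le
        _ ≤ 1 := by
            rw [div_mul_eq_mul_div, one_mul, div_le_one hu0]
            exact hsu.le
    have := intervalIntegral.norm_integral_le_of_norm_le_const key
    rw [sub_zero, abs_of_pos (by positivity : (0:ℝ) < 1/u)] at this
    calc ‖G u s‖ ≤ 2 * ‖s‖ * (1/u) := this
      _ ≤ 4 * ‖s‖ / u := by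
          rw [mul_one_div, div_le_div_iff_of_pos_right hu0]
          nlinarith
  · intro hus
    set a := 1 / ‖s‖ with ha_def
    set b := 1 / u with hb_def
    have ha0 : 0 < a := by positivity
    have hab : a ≤ b := by
      apply one_div_le_one_div_of_le hu0 hus.le
    have hsplit :
        (∫ t in (0:ℝ)..a, (1 - Complex.exp (-(t * s))) / t)
          + (∫ t in a..b, (1 - Complex.exp (-(t * s))) / t) = G u s := by
      exact intervalIntegral.integral_add_adjacent_intervals
        (intInt hs ha0.le le_rfl) (intInt hs hab ha0.le)
    -- first piece
    have h1 : ‖∫ t in (0:ℝ)..a, (1 - Complex.exp (-(t * s))) / t‖ ≤ 2 := by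
      have key : ∀ t ∈ Set.uIoc (0:ℝ) a,
          ‖(1 - Complex.exp (-(t * s))) / t‖ ≤ 2 * ‖s‖ := by
        intro t ht
        rw [Set.uIoc_of_le ha0.le] at ht
        apply bound_small ht.1
        have : t ≤ a := ht.2
        calc t * ‖s‖ ≤ a * ‖s‖ := mul_le_mul_of_nonneg_right this hs0.le
          _ = 1 := by rw [ha_def, one_div_mul_cancel hs0.ne']
      have := intervalIntegral.norm_integral_le_of_norm_le_const key
      rw [sub_zero, abs_of_pos ha0] at this
      calc ‖_‖ ≤ 2 * ‖s‖ * a := this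
        _ = 2 := by rw [ha_def, mul_one_div, mul_div_assoc, div_self hs0.ne', mul_one]
    -- second piece
    have h2 : ‖∫ t in a..b, (1 - Complex.exp (-(t * s))) / t‖
        ≤ 2 * Real.log (‖s‖ / u) := by
      have hgint : IntervalIntegrable (fun t : ℝ => 2 / t) volume a b := by
        apply ContinuousOn.intervalIntegrable
        apply ContinuousOn.div continuousOn_const continuousOn_id
        intro x hx
        rw [Set.uIcc_of_le hab] at hx
        exact ne_of_gt (lt_of_lt_of_le ha0 hx.1)
      have key : ∀ᵐ (t : ℝ) ∂(volume.restrict (Set.uIoc a b)),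
          ‖(1 - Complex.exp (-(t * s))) / t‖ ≤ 2 / t := by
        filter_upwards [ae_restrict_mem measurableSet_uIoc] with t ht
        rw [Set.uIoc_of_le hab] at ht
        exact bound_two hs (lt_of_le_of_lt ha0.le ht.1)
      have := intervalIntegral.norm_integral_le_abs_of_norm_le key hgint
      have hcalc : (∫ t in a..b, 2 / t) = 2 * Real.log (‖s‖ / u) := by
        have h0 : (0:ℝ) ∉ Set.uIcc a b := by
          rw [Set.uIcc_of_le hab]
          intro h
          exact absurd h.1 (not_le.2 ha0)
        have : (∫ t in a..b, 2 / t) = 2 * ∫ t in a..b, 1 / t := by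
          rw [← intervalIntegral.integral_const_mul]
          congr 1; ext t; ring
        rw [this, integral_one_div h0]
        congr 1
        rw [ha_def, hb_def]
        field_simp
      rw [hcalc] at this
      refine this.trans ?_
      rw [abs_of_nonneg]
      apply mul_nonneg (by norm_num)
      apply Real.log_nonneg
      rw [le_div_iff₀ hu0, one_mul]
      exact hus.le
    have hlog : 0 ≤ Real.log (‖s‖ / u) := by
      apply Real.log_nonneg
      rw [le_div_iff₀ hu0, one_mul]
      exact hus.le
    calc ‖G u s‖ = ‖(∫ t in (0:ℝ)..a, (1 - Complex.exp (-(t * s))) / t)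
          + (∫ t in a..b, (1 - Complex.exp (-(t * s))) / t)‖ := by rw [hsplit]
      _ ≤ 2 + 2 * Real.log (‖s‖ / u) := (norm_add_le _ _).trans (add_le_add h1 h2)
      _ ≤ 4 * (1 + Real.log (‖s‖ / u)) := by linarith
end

section
/- For s with Re s = 1, u ≥ 1, and integer ν ≥ 1, the ν-th partial derivative in u of G(u,s) = ∫_0^{1/u}(1−e^{−ts})/t dt satisfies |∂^ν G/∂u^ν| ≤ C_ν · |s|^{ν−1}/u^{2ν−1} whenever |s| > u. -/
open MeasureTheory

open Finset

lemma hasDerivAt_invC (v : ℝ) (hv : v ≠ 0) :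
    HasDerivAt (fun w : ℝ => ((w : ℂ))⁻¹) (-((v : ℂ) ^ 2)⁻¹) v := by
  have hv' : (v : ℂ) ≠ 0 := by exact_mod_cast hv
  exact (hasDerivAt_inv hv').comp_ofReal

lemma hasDerivAt_invPow (m : ℕ) (v : ℝ) (hv : v ≠ 0) :
    HasDerivAt (fun w : ℝ => ((w : ℂ)⁻¹) ^ m) (-(m : ℂ) * ((v : ℂ)⁻¹) ^ (m + 1)) v := by
  have hv' : (v : ℂ) ≠ 0 := by exact_mod_cast hv
  have h3 := ((hasDerivAt_inv hv').pow m).comp_ofReal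
  convert h3 using 1
  · funext y; rfl
  rcases m with _ | j
  · simp
  · simp only [Nat.add_sub_cancel, ← inv_pow]
    push_cast
    ring

lemma hasDerivAt_cexp_inv (s : ℂ) (v : ℝ) (hv : v ≠ 0) :
    HasDerivAt (fun w : ℝ => Complex.exp (-(s / (w : ℂ))))
      (Complex.exp (-(s / (v : ℂ))) * (s * ((v : ℂ)⁻¹) ^ 2)) v := by
  have hv' : (v : ℂ) ≠ 0 := by exact_mod_cast hv
  have h3 := ((((hasDerivAt_inv hv').const_mul s).neg).cexp).comp_ofReal
  have heq : (fun w : ℝ => Complex.exp (-(s / (w : ℂ))))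
      = fun w : ℝ => Complex.exp (-(s * ((w : ℂ))⁻¹)) := by
    funext w
    rw [div_eq_mul_inv]
  rw [heq, div_eq_mul_inv]
  convert h3 using 2
  · rfl
  · rfl
  rw [← inv_pow]
  ring

/-- Structure of the iterated derivatives of `H v = (e^{-s/v} - 1)/v`. -/
lemma structH (n : ℕ) : ∃ (b : ℕ → ℝ) (c : ℝ), (∀ k, n < k → b k = 0) ∧
    ∀ (s : ℂ) (v : ℝ), 0 < v →
      iteratedDeriv n (fun w : ℝ => (Complex.exp (-(s / (w : ℂ))) - 1) / (w : ℂ)) v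
        = Complex.exp (-(s / (v : ℂ))) *
            (∑ k ∈ Finset.range (n + 1), (b k : ℂ) * s ^ k * ((v : ℂ)⁻¹) ^ (n + 1 + k))
          + (c : ℂ) * ((v : ℂ)⁻¹) ^ (n + 1) := by
  induction n with
  | zero =>
    refine ⟨fun k => if k = 0 then 1 else 0, -1, fun k hk => if_neg (by omega), ?_⟩
    · intro s v hv
      have hv' : (v : ℂ) ≠ 0 := by exact_mod_cast hv.ne'
      rw [iteratedDeriv_zero, Finset.sum_range_one]
      push_cast
      field_simp
      ring
  | succ n ih =>
    obtain ⟨b, c, hb0, hb⟩ := ih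
    refine ⟨fun k => (if k = 0 then 0 else b (k - 1)) - ((n : ℝ) + 1 + k) * b k,
      -((n : ℝ) + 1) * c, ?_, ?_⟩
    · intro k hk
      have h1 : b k = 0 := hb0 k (by omega)
      have h2 : (if k = 0 then (0:ℝ) else b (k - 1)) = 0 := by
        rw [if_neg (by omega)]
        exact hb0 (k - 1) (by omega)
      simp [h1, h2]
    · intro s v hv
      have hvne : v ≠ 0 := hv.ne'
      have hloc : iteratedDeriv n (fun w : ℝ => (Complex.exp (-(s / (w : ℂ))) - 1) / (w : ℂ))
          =ᶠ[nhds v] fun w : ℝ => Complex.exp (-(s / (w : ℂ))) *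
            (∑ k ∈ Finset.range (n + 1), (b k : ℂ) * s ^ k * ((w : ℂ)⁻¹) ^ (n + 1 + k))
          + (c : ℂ) * ((w : ℂ)⁻¹) ^ (n + 1) := by
        filter_upwards [IsOpen.mem_nhds isOpen_Ioi hv] with w hw
        exact hb s w hw
      rw [iteratedDeriv_succ, hloc.deriv_eq]
      have hE := hasDerivAt_cexp_inv s v hvne
      have hS : HasDerivAt (fun w : ℝ =>
          ∑ k ∈ Finset.range (n + 1), (b k : ℂ) * s ^ k * ((w : ℂ)⁻¹) ^ (n + 1 + k))
          (∑ k ∈ Finset.range (n + 1), (b k : ℂ) * s ^ k *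
            (-((n : ℂ) + 1 + k) * ((v : ℂ)⁻¹) ^ (n + 1 + k + 1))) v := by
        refine HasDerivAt.fun_sum fun k _ => ?_
        have := (hasDerivAt_invPow (n + 1 + k) v hvne).const_mul ((b k : ℂ) * s ^ k)
        convert this using 2
        · rfl
        push_cast
        ring
      have hC := (hasDerivAt_invPow (n + 1) v hvne).const_mul (c : ℂ)
      have hΦ := (hE.mul hS).add hC
      rw [(by exact hΦ : HasDerivAt (fun w : ℝ => Complex.exp (-(s / (w : ℂ))) *
          (∑ k ∈ Finset.range (n + 1), (b k : ℂ) * s ^ k * ((w : ℂ)⁻¹) ^ (n + 1 + k))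
          + (c : ℂ) * ((w : ℂ)⁻¹) ^ (n + 1)) _ v).deriv]
      have hbn1 : b (n + 1) = 0 := hb0 (n + 1) (by omega)
      set x : ℂ := (v : ℂ)⁻¹ with hx
      have split : ∀ k : ℕ,
          ((((if k = 0 then 0 else b (k - 1)) - ((n : ℝ) + 1 + k) * b k : ℝ)) : ℂ)
              * s ^ k * x ^ (n + 1 + 1 + k)
            = ((if k = 0 then 0 else (b (k - 1) : ℂ)) * s ^ k * x ^ (n + 1 + 1 + k))
              - (((n : ℂ) + 1 + k) * (b k : ℂ) * s ^ k * x ^ (n + 1 + 1 + k)) := by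
        intro k
        rcases eq_or_ne k 0 with h | h <;> simp [h] <;> push_cast <;> ring
      have hA : ∑ k ∈ Finset.range (n + 1 + 1),
            (if k = 0 then 0 else (b (k - 1) : ℂ)) * s ^ k * x ^ (n + 1 + 1 + k)
          = (s * x ^ 2) * ∑ k ∈ Finset.range (n + 1), (b k : ℂ) * s ^ k * x ^ (n + 1 + k) := by
        rw [Finset.sum_range_succ', Finset.mul_sum]
        norm_num
        refine Finset.sum_congr rfl fun k _ => ?_
        ring
      have hB : -∑ k ∈ Finset.range (n + 1 + 1),
            ((n : ℂ) + 1 + k) * (b k : ℂ) * s ^ k * x ^ (n + 1 + 1 + k)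
          = ∑ k ∈ Finset.range (n + 1), (b k : ℂ) * s ^ k *
              (-((n : ℂ) + 1 + k) * x ^ (n + 1 + k + 1)) := by
        rw [Finset.sum_range_succ, hbn1]
        push_cast
        rw [mul_zero, zero_mul, zero_mul, add_zero, ← Finset.sum_neg_distrib]
        refine Finset.sum_congr rfl fun k _ => ?_
        ring
      have key : (∑ k ∈ Finset.range (n + 1 + 1),
            ((((if k = 0 then 0 else b (k - 1)) - ((n : ℝ) + 1 + k) * b k : ℝ)) : ℂ)
              * s ^ k * x ^ (n + 1 + 1 + k))
          = (s * x ^ 2) * (∑ k ∈ Finset.range (n + 1), (b k : ℂ) * s ^ k * x ^ (n + 1 + k))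
            + (∑ k ∈ Finset.range (n + 1), (b k : ℂ) * s ^ k *
              (-((n : ℂ) + 1 + k) * x ^ (n + 1 + k + 1))) := by
        rw [Finset.sum_congr rfl fun k _ => split k, Finset.sum_sub_distrib, hA,
          sub_eq_add_neg, hB]
      rw [key]
      push_cast
      ring

lemma norm_one_sub_exp (s : ℂ) (hs : 0 ≤ s.re) (t : ℝ) (ht : 0 ≤ t) :
    ‖1 - Complex.exp (-((t : ℂ) * s))‖ ≤ ‖s‖ * t := by
  have hder : ∀ r ∈ Set.Icc (0:ℝ) t, HasDerivWithinAt (fun r : ℝ => Complex.exp (-((r:ℂ) * s)))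
      (Complex.exp (-((r:ℂ) * s)) * -(1 * s)) (Set.Icc 0 t) r := by
    intro r _
    exact ((((hasDerivAt_id ((r:ℝ):ℂ)).mul_const s).neg).cexp.comp_ofReal).hasDerivWithinAt
  have hbound : ∀ r ∈ Set.Ico (0:ℝ) t, ‖Complex.exp (-((r:ℂ) * s)) * -(1 * s)‖ ≤ ‖s‖ := by
    intro r hr
    rw [norm_mul, norm_neg, one_mul]
    have h1 : ‖Complex.exp (-((r:ℂ) * s))‖ ≤ 1 := by
      rw [Complex.norm_exp]
      have : (-((r:ℂ) * s)).re = -(r * s.re) := by simp [Complex.mul_re]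
      rw [this]
      exact Real.exp_le_one_iff.mpr (neg_nonpos.mpr (mul_nonneg hr.1 hs))
    calc ‖Complex.exp (-((r:ℂ) * s))‖ * ‖s‖ ≤ 1 * ‖s‖ :=
          mul_le_mul_of_nonneg_right h1 (norm_nonneg s)
      _ = ‖s‖ := one_mul _
  have H := norm_image_sub_le_of_norm_deriv_le_segment' hder hbound t (Set.right_mem_Icc.mpr ht)
  simp only [Complex.ofReal_zero, zero_mul, neg_zero, Complex.exp_zero, sub_zero] at H
  rw [norm_sub_rev] at H
  simpa using H

lemma norm_integrand_le (s : ℂ) (hs : 0 ≤ s.re) (t : ℝ) (ht : 0 ≤ t) :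
    ‖(1 - Complex.exp (-((t:ℂ) * s))) / (t:ℂ)‖ ≤ ‖s‖ := by
  rcases eq_or_lt_of_le ht with h | h
  · simp [← h]
  · rw [norm_div, Complex.norm_real, Real.norm_eq_abs, abs_of_pos h, div_le_iff₀ h]
    rw [mul_comm ‖s‖ t] at *
    calc ‖1 - Complex.exp (-((t:ℂ) * s))‖ ≤ ‖s‖ * t := norm_one_sub_exp s hs t ht
      _ = t * ‖s‖ := mul_comm _ _

lemma integrable_integrand (s : ℂ) (hs : 0 ≤ s.re) (x : ℝ) (hx : 0 < x) :
    IntervalIntegrable (fun t : ℝ => (1 - Complex.exp (-((t:ℂ) * s))) / (t:ℂ)) volume 0 x := by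
  rw [intervalIntegrable_iff_integrableOn_Ioc_of_le hx.le]
  have hmeas : Measurable fun t : ℝ => (1 - Complex.exp (-((t:ℂ) * s))) / (t:ℂ) := by
    exact (measurable_const.sub (Complex.measurable_exp.comp
      ((Complex.measurable_ofReal.mul_const s).neg))).div Complex.measurable_ofReal
  refine Integrable.mono' (integrable_const ‖s‖) hmeas.aestronglyMeasurable ?_
  filter_upwards [ae_restrict_mem measurableSet_Ioc] with t ht
  exact norm_integrand_le s hs t ht.1.le


lemma hasDerivAt_G (s : ℂ) (hs : s.re = 1) (v : ℝ) (hv : 0 < v) :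
    HasDerivAt (fun w : ℝ => G w s) ((Complex.exp (-(s / (v:ℂ))) - 1) / (v:ℂ)) v := by
  have hs0 : 0 ≤ s.re := by rw [hs]; norm_num
  have hvC : (v : ℂ) ≠ 0 := by exact_mod_cast hv.ne'
  have hvinv : (0:ℝ) < v⁻¹ := by positivity
  have hint := integrable_integrand s hs0 v⁻¹ hvinv
  have hcont : ∀ y ∈ Set.Ioi (0:ℝ),
      ContinuousAt (fun t : ℝ => (1 - Complex.exp (-((t:ℂ) * s))) / (t:ℂ)) y := by
    intro y hy
    have h1 : ContinuousAt (fun t : ℝ => (1 - Complex.exp (-((t:ℂ) * s)))) y :=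
      (continuous_const.sub (Complex.continuous_exp.comp
        ((Complex.continuous_ofReal.mul continuous_const).neg))).continuousAt
    exact h1.div Complex.continuous_ofReal.continuousAt (by exact_mod_cast (ne_of_gt hy))
  have hmeas : StronglyMeasurableAtFilter
      (fun t : ℝ => (1 - Complex.exp (-((t:ℂ) * s))) / (t:ℂ)) (nhds v⁻¹) :=
    ContinuousAt.stronglyMeasurableAtFilter isOpen_Ioi hcont v⁻¹ hvinv
  have hF : HasDerivAt (fun x : ℝ => ∫ t in (0:ℝ)..x, (1 - Complex.exp (-((t:ℂ) * s))) / (t:ℂ))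
      ((1 - Complex.exp (-(((v⁻¹:ℝ):ℂ) * s))) / ((v⁻¹:ℝ):ℂ)) v⁻¹ :=
    intervalIntegral.integral_hasDerivAt_right hint hmeas (hcont v⁻¹ hvinv)
  have hinv : HasDerivAt (fun w : ℝ => w⁻¹) (-((v:ℝ)^2)⁻¹) v := hasDerivAt_inv hv.ne'
  have hcomp := hF.scomp v hinv
  have funeq : (fun w : ℝ => G w s)
      = (fun x : ℝ => ∫ t in (0:ℝ)..x, (1 - Complex.exp (-((t:ℂ) * s))) / (t:ℂ)) ∘
        fun w : ℝ => w⁻¹ := by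
    funext w
    simp [G, Function.comp, one_div]
  rw [funeq]
  convert hcomp using 1
  · rfl
  have e1 : ((v⁻¹:ℝ):ℂ) = (v:ℂ)⁻¹ := by push_cast; rfl
  rw [e1, inv_mul_eq_div]
  rw [Complex.real_smul]
  push_cast
  field_simp
  ring

lemma mono_bound (s : ℂ) (u : ℝ) (h1 : 1 ≤ u) (h2 : u < ‖s‖) (n k : ℕ) (hk : k ≤ n) :
    ‖s‖ ^ k / u ^ (n + 1 + k) ≤ ‖s‖ ^ n / u ^ (2 * n + 1) := by
  have hu : (0:ℝ) < u := lt_of_lt_of_le one_pos h1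
  have hs : (0:ℝ) < ‖s‖ := lt_trans hu h2
  rw [div_le_div_iff₀ (by positivity) (by positivity)]
  have key : u ^ (n - k) ≤ ‖s‖ ^ (n - k) := pow_le_pow_left₀ hu.le h2.le _
  have e1 : (n - k) + (n + 1 + k) = 2 * n + 1 := by omega
  have e2 : k + (n - k) = n := by omega
  calc ‖s‖ ^ k * u ^ (2 * n + 1) = (‖s‖ ^ k * u ^ (n - k)) * u ^ (n + 1 + k) := by
        rw [← e1, pow_add]; ring
    _ ≤ (‖s‖ ^ k * ‖s‖ ^ (n - k)) * u ^ (n + 1 + k) := by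
        apply mul_le_mul_of_nonneg_right (mul_le_mul_of_nonneg_left key (by positivity))
          (by positivity)
    _ = ‖s‖ ^ n * u ^ (n + 1 + k) := by rw [← pow_add, e2]

lemma boundH (n : ℕ) : ∃ C : ℝ, 0 < C ∧ ∀ (s : ℂ) (u : ℝ), s.re = 1 → 1 ≤ u → u < ‖s‖ →
    ‖iteratedDeriv n (fun w : ℝ => (Complex.exp (-(s / (w : ℂ))) - 1) / (w : ℂ)) u‖
      ≤ C * ‖s‖ ^ n / u ^ (2 * n + 1) := by
  obtain ⟨b, c, hb0, hb⟩ := structH n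
  refine ⟨(∑ k ∈ Finset.range (n + 1), |b k|) + |c| + 1, by positivity, ?_⟩
  intro s u hs h1 h2
  have hu : (0:ℝ) < u := lt_of_lt_of_le one_pos h1
  rw [hb s u hu]
  have hB : (0:ℝ) ≤ ‖s‖ ^ n / u ^ (2 * n + 1) := by positivity
  have hE : ‖Complex.exp (-(s / (u:ℂ)))‖ ≤ 1 := by
    rw [Complex.norm_exp]
    have he : (-(s / (u:ℂ))).re = -(s.re / u) := by
      simp [Complex.div_ofReal_re]
    rw [he, hs]
    exact Real.exp_le_one_iff.mpr (neg_nonpos.mpr (by positivity))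
  have hterm : ∀ k ∈ Finset.range (n + 1),
      ‖(b k : ℂ) * s ^ k * ((u:ℂ)⁻¹) ^ (n + 1 + k)‖ ≤ |b k| * (‖s‖ ^ n / u ^ (2 * n + 1)) := by
    intro k hk
    rw [norm_mul, norm_mul, norm_pow, norm_pow, norm_inv, Complex.norm_real,
      Real.norm_eq_abs, Complex.norm_real, Real.norm_eq_abs, abs_of_pos hu]
    have : |b k| * ‖s‖ ^ k * (u⁻¹) ^ (n + 1 + k) = |b k| * (‖s‖ ^ k / u ^ (n + 1 + k)) := by
      rw [inv_pow]; ring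
    rw [this]
    exact mul_le_mul_of_nonneg_left
      (mono_bound s u h1 h2 n k (Nat.lt_succ_iff.mp (Finset.mem_range.mp hk))) (abs_nonneg _)
  have hsum : ‖∑ k ∈ Finset.range (n + 1), (b k : ℂ) * s ^ k * ((u:ℂ)⁻¹) ^ (n + 1 + k)‖
      ≤ (∑ k ∈ Finset.range (n + 1), |b k|) * (‖s‖ ^ n / u ^ (2 * n + 1)) := by
    calc ‖∑ k ∈ Finset.range (n + 1), (b k : ℂ) * s ^ k * ((u:ℂ)⁻¹) ^ (n + 1 + k)‖
        ≤ ∑ k ∈ Finset.range (n + 1), ‖(b k : ℂ) * s ^ k * ((u:ℂ)⁻¹) ^ (n + 1 + k)‖ :=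
          norm_sum_le _ _
      _ ≤ ∑ k ∈ Finset.range (n + 1), |b k| * (‖s‖ ^ n / u ^ (2 * n + 1)) :=
          Finset.sum_le_sum hterm
      _ = (∑ k ∈ Finset.range (n + 1), |b k|) * (‖s‖ ^ n / u ^ (2 * n + 1)) := by
          rw [← Finset.sum_mul]
  have hc : ‖(c : ℂ) * ((u:ℂ)⁻¹) ^ (n + 1)‖ ≤ |c| * (‖s‖ ^ n / u ^ (2 * n + 1)) := by
    rw [norm_mul, norm_pow, norm_inv, Complex.norm_real, Real.norm_eq_abs, Complex.norm_real,
      Real.norm_eq_abs, abs_of_pos hu]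
    have h0 := mono_bound s u h1 h2 n 0 (Nat.zero_le n)
    simp only [pow_zero, Nat.add_zero] at h0
    have : |c| * (u⁻¹) ^ (n + 1) = |c| * (1 / u ^ (n + 1)) := by
      rw [inv_pow]; ring
    rw [this]
    exact mul_le_mul_of_nonneg_left h0 (abs_nonneg _)
  calc ‖Complex.exp (-(s / (u:ℂ))) *
          (∑ k ∈ Finset.range (n + 1), (b k : ℂ) * s ^ k * ((u:ℂ)⁻¹) ^ (n + 1 + k))
        + (c : ℂ) * ((u:ℂ)⁻¹) ^ (n + 1)‖
      ≤ ‖Complex.exp (-(s / (u:ℂ))) *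
          (∑ k ∈ Finset.range (n + 1), (b k : ℂ) * s ^ k * ((u:ℂ)⁻¹) ^ (n + 1 + k))‖
        + ‖(c : ℂ) * ((u:ℂ)⁻¹) ^ (n + 1)‖ := norm_add_le _ _
    _ ≤ 1 * ((∑ k ∈ Finset.range (n + 1), |b k|) * (‖s‖ ^ n / u ^ (2 * n + 1)))
        + |c| * (‖s‖ ^ n / u ^ (2 * n + 1)) := by
        gcongr
        · rw [norm_mul]
          exact mul_le_mul hE hsum (norm_nonneg _) zero_le_one
    _ ≤ ((∑ k ∈ Finset.range (n + 1), |b k|) + |c| + 1) * ‖s‖ ^ n / u ^ (2 * n + 1) := by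
        rw [one_mul, mul_div_assoc]
        have : ((∑ k ∈ Finset.range (n + 1), |b k|) + |c| + 1) * (‖s‖ ^ n / u ^ (2 * n + 1))
            = (∑ k ∈ Finset.range (n + 1), |b k|) * (‖s‖ ^ n / u ^ (2 * n + 1))
              + |c| * (‖s‖ ^ n / u ^ (2 * n + 1)) + 1 * (‖s‖ ^ n / u ^ (2 * n + 1)) := by ring
        rw [this]
        nlinarith [hB]

theorem iteratedDeriv_G_bound (ν : ℕ) (hν : 1 ≤ ν) :
    ∃ C : ℝ, 0 < C ∧ ∀ (s : ℂ) (u : ℝ), s.re = 1 → 1 ≤ u → u < ‖s‖ →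
      ‖iteratedDeriv ν (fun v : ℝ => G v s) u‖ ≤ C * ‖s‖ ^ (ν - 1) / u ^ (2 * ν - 1) := by
  obtain ⟨n, rfl⟩ : ∃ n, ν = n + 1 := ⟨ν - 1, by omega⟩
  obtain ⟨C, hC, hb⟩ := boundH n
  refine ⟨C, hC, ?_⟩
  intro s u hs h1 h2
  have hu : (0:ℝ) < u := lt_of_lt_of_le one_pos h1
  have hstep : iteratedDeriv (n + 1) (fun v : ℝ => G v s) u
      = iteratedDeriv n (fun w : ℝ => (Complex.exp (-(s / (w : ℂ))) - 1) / (w : ℂ)) u := by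
    rw [iteratedDeriv_succ']
    apply Filter.EventuallyEq.iteratedDeriv_eq
    filter_upwards [IsOpen.mem_nhds isOpen_Ioi hu] with w hw
    exact (hasDerivAt_G s hs w hw).deriv
  rw [hstep]
  have h3 := hb s u hs h1 h2
  have e1 : n + 1 - 1 = n := by omega
  have e2 : 2 * (n + 1) - 1 = 2 * n + 1 := by omega
  rw [e1, e2]
  exact h3
end
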